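/- arXiv:math/0611138 — 3 statements merged into one kernel-verified Lean document; each statement's English description precedes it below -/
import Mathlib

section
/- Let (V, Ω) be a 2n-dimensional real symplectic vector space. For a symplectic basis e_1,…,e_n,f_1,…,f_n of V (i.e. Ω(e_i,e_j)=Ω(f_i,f_j)=0 and Ω(e_i,f_j)=δ_ij), define the operator ⊥ from alternating k-forms to alternating (k−2)-forms by ⊥ω = Σ_{i=1}^n ι_{f_i}(ι_{e_i} ω), where ι denotes the interior product. Then the operator ⊥ does not depend on the choice of symplectic basis: if e'_1,…,e'_n,f'_1,…,f'_n is another symplectic basis, then Σ_{i=1}^n ι_{f_i}(ι_{e_i} ω) = Σ_{i=1}^n ι_{f'_i}(ι_{e'_i} ω) for every alternating k-form ω on V. -/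
open scoped TensorProduct

namespace SymplSS

variable {V : Type*} [AddCommGroup V] [Module ℝ V]

/-- The wedge product of two real-valued alternating forms (shuffle convention, so that
`(dq ∧ dp)(e, f) = dq(e) dp(f) - dq(f) dp(e)`). -/
noncomputable def wedge {k l : ℕ} (ω : V [⋀^Fin k]→ₗ[ℝ] ℝ) (η : V [⋀^Fin l]→ₗ[ℝ] ℝ) :
    V [⋀^Fin (k + l)]→ₗ[ℝ] ℝ :=
  AlternatingMap.domDomCongr finSumFinEquiv
    ((TensorProduct.lid ℝ ℝ).toLinearMap.compAlternatingMap (ω.domCoprod η))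

/-- The operator `⊥ : Λ^k → Λ^(k-2)`, `⊥ω = ∑ i, ι_(f i) (ι_(e i) ω)`;
for forms of degree `< 2` it is `0`. -/
noncomputable def lower {n : ℕ} (e f : Fin n → V) :
    ∀ {k : ℕ}, (V [⋀^Fin k]→ₗ[ℝ] ℝ) → V [⋀^Fin (k - 2)]→ₗ[ℝ] ℝ
  | 0, _ => 0
  | 1, _ => 0
  | (_ + 2), ω => ∑ i, ((ω.curryLeft (e i)).curryLeft (f i))

/-- A form is *effective* iff `⊥ω = 0`. -/
def IsEff {n : ℕ} (e f : Fin n → V) {k : ℕ} (ω : V [⋀^Fin k]→ₗ[ℝ] ℝ) : Prop :=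
  lower e f ω = 0

/-- `e 1, …, e n, f 1, …, f n` is a symplectic basis for the alternating 2-form `Ω`. -/
structure IsSymplecticBasis {n : ℕ} (Ω : V [⋀^Fin 2]→ₗ[ℝ] ℝ) (e f : Fin n → V) : Prop where
  indep : LinearIndependent ℝ (Sum.elim e f)
  span : Submodule.span ℝ (Set.range (Sum.elim e f)) = ⊤
  ee : ∀ i j, Ω ![e i, e j] = 0
  ff : ∀ i j, Ω ![f i, f j] = 0
  ef : ∀ i j, Ω ![e i, f j] = if i = j then 1 else 0

/-- Nondegeneracy of an alternating 2-form. -/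
def Nondeg (Ω : V [⋀^Fin 2]→ₗ[ℝ] ℝ) : Prop :=
  ∀ v : V, (∀ w : V, Ω ![v, w] = 0) → v = 0

/-- The `i`-th wedge power `Ω^{∧ i}` of a 2-form. -/
noncomputable def omegaPow (Ω : V [⋀^Fin 2]→ₗ[ℝ] ℝ) : ∀ i : ℕ, V [⋀^Fin (2 * i)]→ₗ[ℝ] ℝ
  | 0 => AlternatingMap.constOfIsEmpty ℝ V (Fin 0) 1
  | (i + 1) => wedge (omegaPow Ω i) Ω

/-- Reindexing a form along an equality of degrees. -/
noncomputable def castForm {a b : ℕ} (h : a = b) (ω : V [⋀^Fin a]→ₗ[ℝ] ℝ) :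
    V [⋀^Fin b]→ₗ[ℝ] ℝ :=
  AlternatingMap.domDomCongr (finCongr h) ω

/-- `Ω^{∧ i} ∧ η` as a `k`-form, for `η` a `(k - 2i)`-form; it is `0` when `k - 2i < 0`. -/
noncomputable def omegaPowWedge (Ω : V [⋀^Fin 2]→ₗ[ℝ] ℝ) (k i : ℕ)
    (η : V [⋀^Fin (k - 2 * i)]→ₗ[ℝ] ℝ) : V [⋀^Fin k]→ₗ[ℝ] ℝ :=
  if h : 2 * i ≤ k then castForm (by omega) (wedge (omegaPow Ω i) η) else 0

/-- `Ω ∧ η` as a `k`-form, for `η` a `(k-2)`-form; it is `0` when `k - 2 < 0`. -/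
noncomputable def wedgeOmega (Ω : V [⋀^Fin 2]→ₗ[ℝ] ℝ) (k : ℕ)
    (η : V [⋀^Fin (k - 2)]→ₗ[ℝ] ℝ) : V [⋀^Fin k]→ₗ[ℝ] ℝ :=
  if h : 2 ≤ k then castForm (by omega) (wedge Ω η) else 0

/-- Iterated `⊥`: `⊥^j : Λ^k → Λ^(k - 2j)`. -/
noncomputable def lowerIter {n : ℕ} (e f : Fin n → V) :
    ∀ (j : ℕ) {k : ℕ}, (V [⋀^Fin k]→ₗ[ℝ] ℝ) → V [⋀^Fin (k - 2 * j)]→ₗ[ℝ] ℝ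
  | 0, _, ω => ω
  | (j + 1), _, ω => lower e f (lowerIter e f j ω)

/-- The composite `⊤ ∘ ⊥ : Λ^k → Λ^k` (it is `0` in degrees `< 2`, where `⊥ = 0`). -/
noncomputable def raiseLower {n : ℕ} (e f : Fin n → V) (Ω : V [⋀^Fin 2]→ₗ[ℝ] ℝ) :
    ∀ {k : ℕ}, (V [⋀^Fin k]→ₗ[ℝ] ℝ) → V [⋀^Fin k]→ₗ[ℝ] ℝ
  | 0, _ => 0
  | 1, _ => 0
  | (_ + 2), ω => wedge (lower e f ω) Ω

/-- `⊥` as a linear map. -/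
noncomputable def lowerHom {n : ℕ} (e f : Fin n → V) (k : ℕ) :
    (V [⋀^Fin k]→ₗ[ℝ] ℝ) →ₗ[ℝ] (V [⋀^Fin (k - 2)]→ₗ[ℝ] ℝ) where
  toFun := lower e f
  map_add' ω ω' := by
    match k with
    | 0 => simp [lower]
    | 1 => simp [lower]
    | (m + 2) =>
      show (∑ i, (((ω + ω').curryLeft (e i)).curryLeft (f i))) = _
      simp only [AlternatingMap.curryLeft_add, LinearMap.add_apply, Finset.sum_add_distrib]
      rfl
  map_smul' c ω := by
    match k with
    | 0 => simp [lower]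
    | 1 => simp [lower]
    | (m + 2) =>
      show (∑ i, (((c • ω).curryLeft (e i)).curryLeft (f i))) = _
      simp only [AlternatingMap.curryLeft_smul, LinearMap.smul_apply, Finset.smul_sum,
        RingHom.id_apply]
      show _ = c • ∑ i, ((ω.curryLeft (e i)).curryLeft (f i))
      rw [Finset.smul_sum]

/-- The space `Λ_ε^k` of effective `k`-forms, as a submodule. -/
noncomputable def effSubmodule {n : ℕ} (e f : Fin n → V) (k : ℕ) :
    Submodule ℝ (V [⋀^Fin k]→ₗ[ℝ] ℝ) :=
  LinearMap.ker (lowerHom e f k)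

/-- Left wedge with a fixed form, as a linear map. -/
noncomputable def wedgeHom {k : ℕ} (ω : V [⋀^Fin k]→ₗ[ℝ] ℝ) (l : ℕ) :
    (V [⋀^Fin l]→ₗ[ℝ] ℝ) →ₗ[ℝ] (V [⋀^Fin (k + l)]→ₗ[ℝ] ℝ) where
  toFun := wedge ω
  map_add' η η' := by
    simp only [wedge, ← AlternatingMap.domCoprod'_apply, TensorProduct.tmul_add, map_add,
      LinearMap.compAlternatingMap_add, AlternatingMap.domDomCongr_add]
  map_smul' c η := by
    simp only [wedge, ← AlternatingMap.domCoprod'_apply, TensorProduct.tmul_smul, map_smul,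
      LinearMap.compAlternatingMap_smul, AlternatingMap.domDomCongr_smul, RingHom.id_apply]

/-- `castForm` as a linear map. -/
noncomputable def castHom {a b : ℕ} (h : a = b) :
    (V [⋀^Fin a]→ₗ[ℝ] ℝ) →ₗ[ℝ] (V [⋀^Fin b]→ₗ[ℝ] ℝ) :=
  (AlternatingMap.domDomCongrₗ ℝ (finCongr h)).toLinearMap

/-- The subspace `Ω^{∧ i} ∧ Λ^(k - 2i)` of `Λ^k` (the zero subspace when `k - 2i < 0`). -/
noncomputable def idealPiece (Ω : V [⋀^Fin 2]→ₗ[ℝ] ℝ) (k i : ℕ) :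
    Submodule ℝ (V [⋀^Fin k]→ₗ[ℝ] ℝ) :=
  if h : 2 * i ≤ k then
    (LinearMap.range (wedgeHom (omegaPow Ω i) (k - 2 * i))).map (castHom (by omega))
  else ⊥

/-- A Lagrangian subspace of a `2n`-dimensional symplectic vector space. -/
def IsLagrangian {n : ℕ} (Ω : V [⋀^Fin 2]→ₗ[ℝ] ℝ) (L : Submodule ℝ V) : Prop :=
  Module.finrank ℝ L = n ∧ ∀ u ∈ L, ∀ v ∈ L, Ω ![u, v] = 0

noncomputable def insTwo {k : ℕ} (ω : V [⋀^Fin (k + 2)]→ₗ[ℝ] ℝ) (v : Fin k → V) :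
    V →ₗ[ℝ] V →ₗ[ℝ] ℝ :=
  LinearMap.mk₂ ℝ (fun x y => ((ω.curryLeft x).curryLeft y) v)
    (fun x x' y => by simp) (fun c x y => by simp)
    (fun x y y' => by simp) (fun c x y => by simp)

lemma insTwo_apply {k : ℕ} (ω : V [⋀^Fin (k + 2)]→ₗ[ℝ] ℝ) (v : Fin k → V) (x y : V) :
    insTwo ω v x y = ω (Matrix.vecCons x (Matrix.vecCons y v)) := rfl

lemma insTwo_antisymm {k : ℕ} (ω : V [⋀^Fin (k + 2)]→ₗ[ℝ] ℝ) (v : Fin k → V) (x y : V) :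
    insTwo ω v x y = - insTwo ω v y x := by
  have h : Matrix.vecCons y (Matrix.vecCons x v) ∘ Equiv.swap (0 : Fin (k + 2)) 1 =
      Matrix.vecCons x (Matrix.vecCons y v) := by
    funext j
    refine Fin.cases ?_ (fun i => ?_) j
    · simp
    · refine Fin.cases ?_ (fun m => ?_) i
      · simp
      · rw [Function.comp_apply, Equiv.swap_apply_of_ne_of_ne (Fin.succ_ne_zero _)
          (Fin.succ_succ_ne_one m)]
        simp
  have h01 : (0 : Fin (k + 2)) ≠ 1 := by simp [Fin.ext_iff]
  rw [insTwo_apply, insTwo_apply, ← h, ω.map_swap _ h01]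


noncomputable def omBilin (Ω : V [⋀^Fin 2]→ₗ[ℝ] ℝ) : V →ₗ[ℝ] V →ₗ[ℝ] ℝ :=
  insTwo (k := 0) Ω ![]

lemma omBilin_apply (Ω : V [⋀^Fin 2]→ₗ[ℝ] ℝ) (x y : V) : omBilin Ω x y = Ω ![x, y] := rfl

lemma omega_antisymm (Ω : V [⋀^Fin 2]→ₗ[ℝ] ℝ) (x y : V) : Ω ![x, y] = - Ω ![y, x] :=
  insTwo_antisymm (k := 0) Ω ![] x y

lemma omBilin_inj [FiniteDimensional ℝ V] {Ω : V [⋀^Fin 2]→ₗ[ℝ] ℝ} (hΩ : Nondeg Ω) :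
    Function.Injective (omBilin Ω) := by
  rw [← LinearMap.ker_eq_bot, LinearMap.ker_eq_bot']
  intro v hv
  exact hΩ v fun w => by
    have := congrArg (fun g => g w) hv; simpa [omBilin_apply] using this

noncomputable def omEquiv [FiniteDimensional ℝ V] (Ω : V [⋀^Fin 2]→ₗ[ℝ] ℝ) (hΩ : Nondeg Ω) :
    V ≃ₗ[ℝ] Module.Dual ℝ V :=
  (omBilin Ω).linearEquivOfInjective (omBilin_inj hΩ) Subspace.dual_finrank_eq.symm

noncomputable def TT [FiniteDimensional ℝ V] (Ω : V [⋀^Fin 2]→ₗ[ℝ] ℝ) (hΩ : Nondeg Ω)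
    (B : V →ₗ[ℝ] V →ₗ[ℝ] ℝ) : V →ₗ[ℝ] V :=
  -((omEquiv Ω hΩ).symm.toLinearMap ∘ₗ B.flip)

lemma TT_key [FiniteDimensional ℝ V] (Ω : V [⋀^Fin 2]→ₗ[ℝ] ℝ) (hΩ : Nondeg Ω)
    (B : V →ₗ[ℝ] V →ₗ[ℝ] ℝ) (x y : V) : Ω ![x, TT Ω hΩ B y] = B x y := by
  have hE : ∀ φ, omBilin Ω ((omEquiv Ω hΩ).symm φ) = φ := fun φ => by
    have : omBilin Ω ((omEquiv Ω hΩ).symm φ) = omEquiv Ω hΩ ((omEquiv Ω hΩ).symm φ) :=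
      (LinearMap.linearEquivOfInjective_apply _ _ _).symm
    rw [this, LinearEquiv.apply_symm_apply]
  have h0 : omBilin Ω (TT Ω hΩ B y) = -(B.flip y) := by
    simp only [TT, LinearMap.neg_apply, LinearMap.comp_apply, LinearEquiv.coe_coe, map_neg, hE]
  have h1 : Ω ![TT Ω hΩ B y, x] = -(B x y) := by
    have := congrArg (fun g => g x) h0
    simpa [omBilin_apply] using this
  rw [omega_antisymm, h1, neg_neg]



noncomputable def sympBasis {n : ℕ} {Ω : V [⋀^Fin 2]→ₗ[ℝ] ℝ} {e f : Fin n → V}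
    (hb : IsSymplecticBasis Ω e f) : Module.Basis (Fin n ⊕ Fin n) ℝ V :=
  Module.Basis.mk hb.indep (by rw [hb.span])

lemma sympBasis_inl {n : ℕ} {Ω : V [⋀^Fin 2]→ₗ[ℝ] ℝ} {e f : Fin n → V}
    (hb : IsSymplecticBasis Ω e f) (i : Fin n) : sympBasis hb (Sum.inl i) = e i := by
  simp [sympBasis]

lemma sympBasis_inr {n : ℕ} {Ω : V [⋀^Fin 2]→ₗ[ℝ] ℝ} {e f : Fin n → V}
    (hb : IsSymplecticBasis Ω e f) (i : Fin n) : sympBasis hb (Sum.inr i) = f i := by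
  simp [sympBasis]

lemma coord_inl {n : ℕ} {Ω : V [⋀^Fin 2]→ₗ[ℝ] ℝ} {e f : Fin n → V}
    (hb : IsSymplecticBasis Ω e f) (i : Fin n) :
    (sympBasis hb).coord (Sum.inl i) = (omBilin Ω).flip (f i) := by
  apply (sympBasis hb).ext
  rintro (j | j) <;>
    rw [Module.Basis.coord_apply, Module.Basis.repr_self] <;>
    simp [sympBasis_inl, sympBasis_inr, Finsupp.single_apply, omBilin_apply, hb.ef, hb.ff]

lemma coord_inr {n : ℕ} {Ω : V [⋀^Fin 2]→ₗ[ℝ] ℝ} {e f : Fin n → V}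
    (hb : IsSymplecticBasis Ω e f) (i : Fin n) :
    (sympBasis hb).coord (Sum.inr i) = -((omBilin Ω).flip (e i)) := by
  apply (sympBasis hb).ext
  rintro (j | j)
  · rw [Module.Basis.coord_apply, Module.Basis.repr_self]
    simp [sympBasis_inl, Finsupp.single_apply, omBilin_apply, hb.ee]
  · rw [Module.Basis.coord_apply, Module.Basis.repr_self]
    have h : Ω ![f j, e i] = -Ω ![e i, f j] := by rw [omega_antisymm]
    simp [sympBasis_inr, Finsupp.single_apply, omBilin_apply, h, hb.ef, eq_comm]

lemma trace_TT [FiniteDimensional ℝ V] {n : ℕ} {Ω : V [⋀^Fin 2]→ₗ[ℝ] ℝ} (hΩ : Nondeg Ω)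
    {e f : Fin n → V} (hb : IsSymplecticBasis Ω e f) (B : V →ₗ[ℝ] V →ₗ[ℝ] ℝ)
    (hB : ∀ x y, B x y = -B y x) :
    LinearMap.trace ℝ V (TT Ω hΩ B) =
      (∑ i, B (e i) (f i)) + ∑ i, B (e i) (f i) := by
  classical
  rw [LinearMap.trace_eq_matrix_trace ℝ (sympBasis hb), Matrix.trace, Fintype.sum_sum_type]
  have h1 : ∀ i : Fin n,
      Matrix.diag ((LinearMap.toMatrix (sympBasis hb) (sympBasis hb)) (TT Ω hΩ B)) (Sum.inl i)
        = B (e i) (f i) := by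
    intro i
    rw [Matrix.diag_apply, LinearMap.toMatrix_apply, ← Module.Basis.coord_apply, coord_inl hb,
      sympBasis_inl]
    show Ω ![TT Ω hΩ B (e i), f i] = B (e i) (f i)
    rw [omega_antisymm, TT_key, ← hB]
  have h2 : ∀ i : Fin n,
      Matrix.diag ((LinearMap.toMatrix (sympBasis hb) (sympBasis hb)) (TT Ω hΩ B)) (Sum.inr i)
        = B (e i) (f i) := by
    intro i
    rw [Matrix.diag_apply, LinearMap.toMatrix_apply, ← Module.Basis.coord_apply, coord_inr hb,
      sympBasis_inr]
    show -(Ω ![TT Ω hΩ B (f i), e i]) = B (e i) (f i)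
    rw [omega_antisymm, neg_neg, TT_key]
  rw [Finset.sum_congr rfl fun i _ => h1 i, Finset.sum_congr rfl fun i _ => h2 i]

lemma sum_B_invariant [FiniteDimensional ℝ V] {n : ℕ} {Ω : V [⋀^Fin 2]→ₗ[ℝ] ℝ}
    (hΩ : Nondeg Ω) {e f e' f' : Fin n → V} (hb : IsSymplecticBasis Ω e f) (hb' : IsSymplecticBasis Ω e' f')
    (B : V →ₗ[ℝ] V →ₗ[ℝ] ℝ) (hB : ∀ x y, B x y = -B y x) :
    ∑ i, B (e i) (f i) = ∑ i, B (e' i) (f' i) := by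
  have h1 := trace_TT hΩ hb B hB
  have h2 := trace_TT hΩ hb' B hB
  rw [h1] at h2
  linarith


/-- The operator `⊥ω = ∑ i, ι_(f i) (ι_(e i) ω)` does not depend on the
choice of symplectic basis of the `2n`-dimensional symplectic vector space `(V, Ω)`. -/
theorem lower_independent_of_symplectic_basis
    {V : Type*} [AddCommGroup V] [Module ℝ V] [FiniteDimensional ℝ V] {n : ℕ}
    (hdim : Module.finrank ℝ V = 2 * n)
    (Ω : V [⋀^Fin 2]→ₗ[ℝ] ℝ) (hΩ : Nondeg Ω)
    {e f e' f' : Fin n → V}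
    (hb : IsSymplecticBasis Ω e f) (hb' : IsSymplecticBasis Ω e' f')
    (k : ℕ) (ω : V [⋀^Fin (k + 2)]→ₗ[ℝ] ℝ) :
    ∑ i, ((ω.curryLeft (e i)).curryLeft (f i)) =
      ∑ i, ((ω.curryLeft (e' i)).curryLeft (f' i)) := by
  ext v
  have h1 : (∑ i, ((ω.curryLeft (e i)).curryLeft (f i))) v = ∑ i, insTwo ω v (e i) (f i) := by
    induction (Finset.univ : Finset (Fin n)) using Finset.induction with
    | empty => simp
    | insert _ _ h ih => simp [Finset.sum_insert h, ih]; rfl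
  have h2 : (∑ i, ((ω.curryLeft (e' i)).curryLeft (f' i))) v = ∑ i, insTwo ω v (e' i) (f' i) := by
    induction (Finset.univ : Finset (Fin n)) using Finset.induction with
    | empty => simp
    | insert _ _ h ih => simp [Finset.sum_insert h, ih]; rfl
  rw [h1, h2]
  exact sum_B_invariant hΩ hb hb' (insTwo ω v) (fun x y => insTwo_antisymm ω v x y)

end SymplSS
end

section
/- Let (V, Ω) be a 2n-dimensional real symplectic vector space. For every k ≥ 0, the space Λ^k of alternating k-forms on V splits into the direct sum Λ^k = Λ_ε^k ⊕ (Ω ∧ Λ^{k−2}), i.e. every alternating k-form is uniquely the sum of an effective k-form and a k-form of the shape Ω∧η with η ∈ Λ^{k−2}. -/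
open scoped TensorProduct

namespace SymplSS

variable {V : Type*} [AddCommGroup V] [Module ℝ V]

section AuxLefschetz
set_option maxHeartbeats 1000000
set_option linter.unusedSectionVars false

noncomputable def pairB {ι : Type*} [Fintype ι] (b : ι → V) (d : ℕ) :
    LinearMap.BilinForm ℝ (V [⋀^Fin d]→ₗ[ℝ] ℝ) :=
  LinearMap.mk₂ ℝ (fun ω η => ∑ a : Fin d → ι, ω (b ∘ a) * η (b ∘ a))
    (fun ω ω' η => by simp [add_mul, Finset.sum_add_distrib])
    (fun c ω η => by
      simp only [AlternatingMap.smul_apply, smul_eq_mul, Finset.mul_sum]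
      exact Finset.sum_congr rfl fun a _ => by ring)
    (fun ω η η' => by simp [mul_add, Finset.sum_add_distrib])
    (fun c ω η => by
      simp only [AlternatingMap.smul_apply, smul_eq_mul, Finset.mul_sum]
      exact Finset.sum_congr rfl fun a _ => by ring)

lemma pairB_apply {ι : Type*} [Fintype ι] (b : ι → V) (d : ℕ)
    (ω η : V [⋀^Fin d]→ₗ[ℝ] ℝ) :
    pairB b d ω η = ∑ a : Fin d → ι, ω (b ∘ a) * η (b ∘ a) := rfl

lemma pairB_symm {ι : Type*} [Fintype ι] (b : ι → V) (d : ℕ)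
    (ω η : V [⋀^Fin d]→ₗ[ℝ] ℝ) : pairB b d ω η = pairB b d η ω := by
  simp [pairB_apply, mul_comm]

lemma pairB_isRefl {ι : Type*} [Fintype ι] (b : ι → V) (d : ℕ) :
    (pairB b d).IsRefl := fun ω η h => by rwa [pairB_symm]

lemma pairB_eq_zero {ι : Type*} [Fintype ι] (b : Module.Basis ι ℝ V) {d : ℕ}
    {ω : V [⋀^Fin d]→ₗ[ℝ] ℝ} (h : pairB (⇑b) d ω ω = 0) : ω = 0 := by
  have h0 : ∀ a : Fin d → ι, ω (⇑b ∘ a) = 0 := by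
    rw [pairB_apply] at h
    intro a
    have := (Finset.sum_eq_zero_iff_of_nonneg
      (fun a _ => mul_self_nonneg (ω (⇑b ∘ a)))).mp h a (Finset.mem_univ a)
    exact mul_self_eq_zero.mp this
  refine Module.Basis.ext_alternating b fun v _ => ?_
  simpa [Function.comp_def] using h0 v

lemma pairB_restrict_nondeg {ι : Type*} [Fintype ι] (b : Module.Basis ι ℝ V) (d : ℕ)
    (W : Submodule ℝ (V [⋀^Fin d]→ₗ[ℝ] ℝ)) :
    (((pairB (⇑b) d)).restrict W).Nondegenerate := by
  refine ⟨fun ⟨ω, hω⟩ h => ?_, fun ⟨ω, hω⟩ h => ?_⟩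
  all_goals
    have := h ⟨ω, hω⟩
    simp only [LinearMap.BilinForm.restrict_apply, Submodule.coe_mk] at this
    exact Subtype.ext (pairB_eq_zero b this)

lemma findim_alt [FiniteDimensional ℝ V] (d : ℕ) :
    FiniteDimensional ℝ (V [⋀^Fin d]→ₗ[ℝ] ℝ) := by
  let c : (V [⋀^Fin d]→ₗ[ℝ] ℝ) →ₗ[ℝ] MultilinearMap ℝ (fun _ : Fin d => V) ℝ :=
    { toFun := fun ω => ω.toMultilinearMap
      map_add' := fun _ _ => rfl
      map_smul' := fun _ _ => rfl }
  exact Module.Finite.of_injective c fun x y hxy =>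
    AlternatingMap.coe_multilinearMap_injective hxy

lemma wedge_apply_aux {m : ℕ} (Ω : V [⋀^Fin 2]→ₗ[ℝ] ℝ) (η : V [⋀^Fin m]→ₗ[ℝ] ℝ)
    (v : Fin (2 + m) → V) :
    ((2 * Nat.factorial m : ℕ) : ℝ) * wedge Ω η v =
      ∑ σ : Equiv.Perm (Fin 2 ⊕ Fin m),
        ((Equiv.Perm.sign σ : ℤ) : ℝ) *
          (Ω (v ∘ finSumFinEquiv ∘ σ ∘ Sum.inl) * η (v ∘ finSumFinEquiv ∘ σ ∘ Sum.inr)) := by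
  have key := MultilinearMap.domCoprod_alternization_eq Ω η
  have key2 := congrArg
    (fun F : V [⋀^(Fin 2 ⊕ Fin m)]→ₗ[ℝ] (ℝ ⊗[ℝ] ℝ) =>
      (TensorProduct.lid ℝ ℝ).toLinearMap (F (v ∘ finSumFinEquiv))) key
  simp only [MultilinearMap.alternatization_apply, AlternatingMap.smul_apply, map_sum,
    MultilinearMap.domDomCongr_apply, MultilinearMap.domCoprod_apply, Fintype.card_fin,
    Units.smul_def, map_zsmul, map_nsmul, LinearEquiv.coe_coe, TensorProduct.lid_tmul] at key2
  simp only [zsmul_eq_mul, nsmul_eq_mul, smul_eq_mul] at key2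
  have hw : wedge Ω η v =
      (TensorProduct.lid ℝ ℝ).toLinearMap ((Ω.domCoprod η) (v ∘ finSumFinEquiv)) := rfl
  rw [hw]
  rw [show ((2 * Nat.factorial m : ℕ) : ℝ) = ((Nat.factorial 2 * Nat.factorial m : ℕ) : ℝ) by
    norm_num [Nat.factorial_two]]
  simp only [LinearEquiv.coe_coe, Function.comp_def] at key2 hw ⊢
  exact key2.symm

lemma vec_swap {m : ℕ} (x y : V) (w : Fin m → V) :
    Fin.cons y (Fin.cons x w) = (Fin.cons x (Fin.cons y w)) ∘ Equiv.swap (0 : Fin (m + 2)) 1 := by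
  funext z
  refine Fin.cases ?_ (fun z' => ?_) z
  · simp [Equiv.swap_apply_left]
  · refine Fin.cases ?_ (fun z'' => ?_) z'
    · have h1 : Fin.succ (0 : Fin (m + 1)) = (1 : Fin (m + 2)) := rfl
      rw [h1]
      simp [Equiv.swap_apply_right]
    · have hz : Equiv.swap (0 : Fin (m + 2)) 1 z''.succ.succ = z''.succ.succ := by
        apply Equiv.swap_apply_of_ne_of_ne
        · exact Fin.succ_ne_zero _
        · intro h
          have := congrArg Fin.val h
          simp [Fin.val_succ] at this
      simp [hz]

lemma vec2_swap (x y : V) : ![y, x] = ![x, y] ∘ Equiv.swap (0 : Fin 2) 1 := by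
  funext z; fin_cases z <;> simp

lemma contract {n m : ℕ} {e f : Fin n → V} {Ω : V [⋀^Fin 2]→ₗ[ℝ] ℝ}
    (hb : IsSymplecticBasis Ω e f) (ω : V [⋀^Fin (m + 2)]→ₗ[ℝ] ℝ) (w : Fin m → V) :
    ∑ s : Fin n ⊕ Fin n, ∑ t : Fin n ⊕ Fin n,
      Ω ![Sum.elim e f s, Sum.elim e f t] *
        ω (Fin.cons (Sum.elim e f s) (Fin.cons (Sum.elim e f t) w)) =
    2 * ∑ i, ω (Fin.cons (e i) (Fin.cons (f i) w)) := by
  have h01 : (0 : Fin (m + 2)) ≠ 1 := Fin.zero_ne_one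
  have h01' : (0 : Fin 2) ≠ 1 := by decide
  have hωswap : ∀ x y : V, ω (Fin.cons y (Fin.cons x w)) = -ω (Fin.cons x (Fin.cons y w)) := by
    intro x y
    rw [vec_swap x y w, AlternatingMap.map_swap _ _ h01]
  have hfe : ∀ i j : Fin n, Ω ![f i, e j] = -(if j = i then 1 else 0) := by
    intro i j
    rw [vec2_swap (e j) (f i), AlternatingMap.map_swap _ _ h01', hb.ef]
  have hfeω : ∀ i j : Fin n,
      ω (Fin.cons (f i) (Fin.cons (e j) w)) = -ω (Fin.cons (e j) (Fin.cons (f i) w)) :=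
    fun i j => hωswap (e j) (f i)
  simp only [Fintype.sum_sum_type, Sum.elim_inl, Sum.elim_inr]
  simp only [hb.ee, hb.ff, hb.ef, hfe, hfeω, zero_mul, Finset.sum_const_zero, add_zero, zero_add,
    ite_mul, one_mul, neg_mul, mul_neg, neg_neg]
  simp only [Finset.sum_ite_eq, Finset.sum_ite_eq', Finset.mem_univ, if_true]
  ring


lemma altsum_apply {ι' : Type*} {d : ℕ} (s : Finset ι') (g : ι' → V [⋀^Fin d]→ₗ[ℝ] ℝ)
    (w : Fin d → V) : (∑ i ∈ s, g i) w = ∑ i ∈ s, g i w := by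
  induction s using Finset.cons_induction with
  | empty => simp
  | cons a s ha ih => simp [Finset.sum_cons, ih]

lemma lower_apply {n m : ℕ} (e f : Fin n → V) (ω : V [⋀^Fin (m + 2)]→ₗ[ℝ] ℝ)
    (w : Fin m → V) :
    lower e f ω w = ∑ i, ω (Fin.cons (e i) (Fin.cons (f i) w)) := by
  show (∑ i, ((ω.curryLeft (e i)).curryLeft (f i))) w = _
  rw [altsum_apply]
  rfl

lemma adj_key {n m : ℕ} {e f : Fin n → V} {Ω : V [⋀^Fin 2]→ₗ[ℝ] ℝ}
    (hb : IsSymplecticBasis Ω e f) (b : Module.Basis (Fin n ⊕ Fin n) ℝ V)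
    (hbc : ⇑b = Sum.elim e f)
    (η : V [⋀^Fin m]→ₗ[ℝ] ℝ) (ω : V [⋀^Fin (m + 2)]→ₗ[ℝ] ℝ) :
    ((2 * Nat.factorial m : ℕ) : ℝ) *
        pairB (⇑b) (m + 2) (castForm (by omega) (wedge Ω η)) ω =
      ((Nat.factorial (2 + m) * 2 : ℕ) : ℝ) * pairB (⇑b) m η (lower e f ω) := by
  classical
  have hcast : (2 : ℕ) + m = m + 2 := by omega
  set F : (Fin 2 ⊕ Fin m) ≃ Fin (m + 2) := finSumFinEquiv.trans (finCongr hcast) with hFdef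
  -- Step 1: expand LHS pointwise using the alternatization formula
  rw [pairB_apply, Finset.mul_sum]
  have step1 : ∀ a : Fin (m + 2) → (Fin n ⊕ Fin n),
      ((2 * Nat.factorial m : ℕ) : ℝ) *
          (castForm hcast (wedge Ω η) (⇑b ∘ a) * ω (⇑b ∘ a)) =
        ∑ σ : Equiv.Perm (Fin 2 ⊕ Fin m),
          ((Equiv.Perm.sign σ : ℤ) : ℝ) *
            (Ω (⇑b ∘ a ∘ F ∘ σ ∘ Sum.inl) * η (⇑b ∘ a ∘ F ∘ σ ∘ Sum.inr)) * ω (⇑b ∘ a) := by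
    intro a
    have hv := wedge_apply_aux Ω η (⇑b ∘ a ∘ finCongr hcast)
    have hc : castForm hcast (wedge Ω η) (⇑b ∘ a) = wedge Ω η (⇑b ∘ a ∘ finCongr hcast) := rfl
    rw [hc, ← mul_assoc, hv, Finset.sum_mul]
    refine Finset.sum_congr rfl fun σ _ => ?_
    congr 1
  simp only [step1]
  rw [Finset.sum_comm]
  -- Step 2: each permutation contributes the same amount
  have step2 : ∀ σ : Equiv.Perm (Fin 2 ⊕ Fin m),
      (∑ a : Fin (m + 2) → (Fin n ⊕ Fin n),
        ((Equiv.Perm.sign σ : ℤ) : ℝ) *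
          (Ω (⇑b ∘ a ∘ F ∘ σ ∘ Sum.inl) * η (⇑b ∘ a ∘ F ∘ σ ∘ Sum.inr)) * ω (⇑b ∘ a)) =
      ∑ a : Fin (m + 2) → (Fin n ⊕ Fin n),
        (Ω (⇑b ∘ a ∘ F ∘ Sum.inl) * η (⇑b ∘ a ∘ F ∘ Sum.inr)) * ω (⇑b ∘ a) := by
    intro σ
    set π : Equiv.Perm (Fin (m + 2)) := F.permCongr σ with hπdef
    have hπF : ∀ x, π (F x) = F (σ x) := by
      intro x; simp [hπdef, Equiv.permCongr_apply]
    have hsgn : Equiv.Perm.sign π = Equiv.Perm.sign σ := Equiv.Perm.sign_permCongr F σ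
    refine Fintype.sum_equiv (Equiv.arrowCongr π.symm (Equiv.refl (Fin n ⊕ Fin n)))
      _ _ fun a => ?_
    have harr : (Equiv.arrowCongr π.symm (Equiv.refl (Fin n ⊕ Fin n))) a = a ∘ π := by
      funext i; simp [Equiv.arrowCongr_apply, Function.comp]
    rw [harr]
    have h1 : ⇑b ∘ (a ∘ π) ∘ F ∘ Sum.inl = ⇑b ∘ a ∘ F ∘ σ ∘ Sum.inl := by
      funext x; simp [Function.comp, hπF]
    have h2 : ⇑b ∘ (a ∘ π) ∘ F ∘ Sum.inr = ⇑b ∘ a ∘ F ∘ σ ∘ Sum.inr := by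
      funext x; simp [Function.comp, hπF]
    have h3 : ω (⇑b ∘ (a ∘ π)) = ((Equiv.Perm.sign σ : ℤ) : ℝ) * ω (⇑b ∘ a) := by
      have : ⇑b ∘ (a ∘ π) = (⇑b ∘ a) ∘ π := rfl
      rw [this, AlternatingMap.map_perm, hsgn]
      rcases Int.units_eq_one_or (Equiv.Perm.sign σ) with h | h <;> rw [h] <;> simp
    rw [h1, h2, h3]
    rcases Int.units_eq_one_or (Equiv.Perm.sign σ) with h | h <;> rw [h] <;> push_cast <;> ring
  -- Step 3: contraction of the Ω-slot against the symplectic basis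
  have step3 : (∑ a : Fin (m + 2) → (Fin n ⊕ Fin n),
      (Ω (⇑b ∘ a ∘ F ∘ Sum.inl) * η (⇑b ∘ a ∘ F ∘ Sum.inr)) * ω (⇑b ∘ a)) =
      2 * pairB (⇑b) m η (lower e f ω) := by
    set E : (((Fin n ⊕ Fin n) × (Fin n ⊕ Fin n)) × (Fin m → (Fin n ⊕ Fin n))) ≃ ((Fin 2 ⊕ Fin m) → (Fin n ⊕ Fin n)) :=
      (((finTwoArrowEquiv _).symm.prodCongr (Equiv.refl (Fin m → (Fin n ⊕ Fin n)))).trans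
        (Equiv.sumArrowEquivProdArrow (Fin 2) (Fin m) _).symm) with hEdef
    have hE : ∀ (s t : Fin n ⊕ Fin n) (r : Fin m → (Fin n ⊕ Fin n)), E ((s, t), r) = Sum.elim ![s, t] r := by
      intro s t r
      funext x
      cases x <;> simp [hEdef, Equiv.sumArrowEquivProdArrow]
    have hre : (∑ a : Fin (m + 2) → (Fin n ⊕ Fin n),
        (Ω (⇑b ∘ a ∘ F ∘ Sum.inl) * η (⇑b ∘ a ∘ F ∘ Sum.inr)) * ω (⇑b ∘ a)) =
        ∑ c : (Fin 2 ⊕ Fin m) → (Fin n ⊕ Fin n),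
          (Ω (⇑b ∘ c ∘ Sum.inl) * η (⇑b ∘ c ∘ Sum.inr)) * ω (⇑b ∘ c ∘ ⇑F.symm) := by
      refine Fintype.sum_equiv (Equiv.arrowCongr F.symm (Equiv.refl (Fin n ⊕ Fin n))) _ _ fun a => ?_
      have he : (Equiv.arrowCongr F.symm (Equiv.refl (Fin n ⊕ Fin n))) a = a ∘ F := by
        funext i; simp [Equiv.arrowCongr_apply, Function.comp]
      rw [he]
      have h1 : ⇑b ∘ (a ∘ ⇑F) ∘ Sum.inl = ⇑b ∘ a ∘ ⇑F ∘ Sum.inl := rfl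
      have h2 : ⇑b ∘ (a ∘ ⇑F) ∘ Sum.inr = ⇑b ∘ a ∘ ⇑F ∘ Sum.inr := rfl
      have h3 : ⇑b ∘ (a ∘ ⇑F) ∘ ⇑F.symm = ⇑b ∘ a := by
        funext i; simp [Function.comp]
      rw [h1, h2, h3]
    rw [hre, ← Equiv.sum_comp E, Fintype.sum_prod_type, Fintype.sum_prod_type]
    have hA : ∀ (s t : Fin n ⊕ Fin n) (r : Fin m → (Fin n ⊕ Fin n)), ⇑b ∘ (Sum.elim ![s, t] r) ∘ Sum.inl = ![b s, b t] := by
      intro s t r; funext x; fin_cases x <;> simp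
    have hB : ∀ (s t : Fin n ⊕ Fin n) (r : Fin m → (Fin n ⊕ Fin n)), ⇑b ∘ (Sum.elim ![s, t] r) ∘ Sum.inr = ⇑b ∘ r := by
      intro s t r; funext x; simp
    have hF0 : F (Sum.inl 0) = 0 := by
      apply Fin.ext; simp [hFdef]
    have hF1 : F (Sum.inl 1) = 1 := by
      apply Fin.ext; simp [hFdef]
    have hFr : ∀ j : Fin m, F (Sum.inr j) = j.succ.succ := by
      intro j; apply Fin.ext; simp [hFdef, Fin.val_succ]
    have hC : ∀ (s t : Fin n ⊕ Fin n) (r : Fin m → (Fin n ⊕ Fin n)),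
        ⇑b ∘ (Sum.elim ![s, t] r) ∘ ⇑F.symm =
          Fin.cons (b s) (Fin.cons (b t) (⇑b ∘ r)) := by
      intro s t r
      have key : ∀ x : Fin 2 ⊕ Fin m,
          b (Sum.elim ![s, t] r x) =
            (Fin.cons (b s) (Fin.cons (b t) (⇑b ∘ r)) : Fin (m + 2) → V) (F x) := by
        intro x
        have h1s : (1 : Fin (m + 2)) = Fin.succ 0 := rfl
        rcases x with j | j
        · fin_cases j
          · show b (Sum.elim ![s, t] r (Sum.inl 0)) =
              (Fin.cons (b s) (Fin.cons (b t) (⇑b ∘ r)) : Fin (m + 2) → V) (F (Sum.inl 0))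
            rw [hF0, Fin.cons_zero]; simp
          · show b (Sum.elim ![s, t] r (Sum.inl 1)) =
              (Fin.cons (b s) (Fin.cons (b t) (⇑b ∘ r)) : Fin (m + 2) → V) (F (Sum.inl 1))
            rw [hF1, h1s, Fin.cons_succ, Fin.cons_zero]; simp
        · rw [hFr j, Fin.cons_succ, Fin.cons_succ]; simp
      funext i
      have := key (F.symm i)
      rwa [Equiv.apply_symm_apply] at this
    simp only [hE, hA, hB, hC]
    -- now reorder sums and contract
    rw [pairB_apply, Finset.mul_sum]
    have hrhs : ∀ r : Fin m → Fin n ⊕ Fin n,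
        2 * (η (⇑b ∘ r) * lower e f ω (⇑b ∘ r)) =
        ∑ s : Fin n ⊕ Fin n, ∑ t : Fin n ⊕ Fin n, (Ω ![b s, b t] * η (⇑b ∘ r)) *
          ω (Fin.cons (b s) (Fin.cons (b t) (⇑b ∘ r))) := by
      intro r
      have hc := contract hb ω (⇑b ∘ r)
      rw [lower_apply, hbc]
      rw [hbc] at hc
      calc 2 * (η (Sum.elim e f ∘ r) *
              ∑ i : Fin n, ω (Fin.cons (e i) (Fin.cons (f i) (Sum.elim e f ∘ r)))) =
          η (Sum.elim e f ∘ r) *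
            (2 * ∑ i : Fin n, ω (Fin.cons (e i) (Fin.cons (f i) (Sum.elim e f ∘ r)))) := by ring
        _ = η (Sum.elim e f ∘ r) *
            ∑ s : Fin n ⊕ Fin n, ∑ t : Fin n ⊕ Fin n,
              Ω ![Sum.elim e f s, Sum.elim e f t] *
                ω (Fin.cons (Sum.elim e f s) (Fin.cons (Sum.elim e f t) (Sum.elim e f ∘ r))) := by
            rw [hc]
        _ = _ := by
            rw [Finset.mul_sum]
            refine Finset.sum_congr rfl fun s _ => ?_
            rw [Finset.mul_sum]
            refine Finset.sum_congr rfl fun t _ => ?_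
            ring
    have reorder : (∑ s : Fin n ⊕ Fin n, ∑ t : Fin n ⊕ Fin n, ∑ r : Fin m → Fin n ⊕ Fin n,
          Ω ![b s, b t] * η (⇑b ∘ r) * ω (Fin.cons (b s) (Fin.cons (b t) (⇑b ∘ r)))) =
        ∑ r : Fin m → Fin n ⊕ Fin n, ∑ s : Fin n ⊕ Fin n, ∑ t : Fin n ⊕ Fin n,
          Ω ![b s, b t] * η (⇑b ∘ r) * ω (Fin.cons (b s) (Fin.cons (b t) (⇑b ∘ r))) :=
      (Finset.sum_congr rfl fun s _ => Finset.sum_comm).trans Finset.sum_comm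
    rw [reorder]
    exact Finset.sum_congr rfl fun r _ => (hrhs r).symm
  -- final assembly
  calc (∑ σ : Equiv.Perm (Fin 2 ⊕ Fin m), ∑ a : Fin (m + 2) → Fin n ⊕ Fin n,
        ((Equiv.Perm.sign σ : ℤ) : ℝ) *
          (Ω (⇑b ∘ a ∘ F ∘ σ ∘ Sum.inl) * η (⇑b ∘ a ∘ F ∘ σ ∘ Sum.inr)) * ω (⇑b ∘ a)) =
      ∑ _σ : Equiv.Perm (Fin 2 ⊕ Fin m), 2 * pairB (⇑b) m η (lower e f ω) :=
        Finset.sum_congr rfl fun σ _ => (step2 σ).trans step3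
    _ = ((Nat.factorial (2 + m) * 2 : ℕ) : ℝ) * pairB (⇑b) m η (lower e f ω) := by
        rw [Finset.sum_const, Finset.card_univ, Fintype.card_perm]
        have hcard : Fintype.card (Fin 2 ⊕ Fin m) = 2 + m := by simp
        rw [hcard, nsmul_eq_mul]
        push_cast
        ring

end AuxLefschetz

/-- `Λ^k` splits as the direct sum `Λ_ε^k ⊕ (Ω ∧ Λ^(k-2))`: every alternating
`k`-form is uniquely the sum of an effective `k`-form and a form of the shape `Ω ∧ η`. -/
theorem splitting_effective_top
    {V : Type*} [AddCommGroup V] [Module ℝ V] [FiniteDimensional ℝ V] {n : ℕ}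
    (hdim : Module.finrank ℝ V = 2 * n)
    (Ω : V [⋀^Fin 2]→ₗ[ℝ] ℝ) (hΩ : Nondeg Ω)
    {e f : Fin n → V} (hb : IsSymplecticBasis Ω e f)
    (k : ℕ) (ω : V [⋀^Fin k]→ₗ[ℝ] ℝ) :
    ∃! p : (V [⋀^Fin k]→ₗ[ℝ] ℝ) × (V [⋀^Fin k]→ₗ[ℝ] ℝ),
      IsEff e f p.1 ∧
      (∃ η : V [⋀^Fin (k - 2)]→ₗ[ℝ] ℝ, p.2 = wedgeOmega Ω k η) ∧
      ω = p.1 + p.2 := by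
  classical
  obtain _ | _ | m := k
  · -- k = 0
    refine ⟨(ω, 0), ⟨?_, ⟨0, ?_⟩, ?_⟩, ?_⟩
    · show lower e f ω = 0
      rfl
    · show (0 : V [⋀^Fin 0]→ₗ[ℝ] ℝ) = wedgeOmega Ω 0 0
      unfold wedgeOmega
      rw [dif_neg (by omega)]
    · exact (add_zero ω).symm
    · rintro ⟨q1, q2⟩ ⟨hq1, ⟨η', hq2⟩, hq3⟩
      unfold wedgeOmega at hq2
      rw [dif_neg (by omega)] at hq2
      subst hq2
      rw [add_zero] at hq3
      rw [hq3]
  · -- k = 1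
    refine ⟨(ω, 0), ⟨?_, ⟨0, ?_⟩, ?_⟩, ?_⟩
    · show lower e f ω = 0
      rfl
    · show (0 : V [⋀^Fin 1]→ₗ[ℝ] ℝ) = wedgeOmega Ω 1 0
      unfold wedgeOmega
      rw [dif_neg (by omega)]
    · exact (add_zero ω).symm
    · rintro ⟨q1, q2⟩ ⟨hq1, ⟨η', hq2⟩, hq3⟩
      unfold wedgeOmega at hq2
      rw [dif_neg (by omega)] at hq2
      subst hq2
      rw [add_zero] at hq3
      rw [hq3]
  · -- k = m + 2
    have hcast : (2 : ℕ) + m = m + 2 := by omega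
    have hspan : ⊤ ≤ Submodule.span ℝ (Set.range (Sum.elim e f)) := hb.span.ge
    let b : Module.Basis (Fin n ⊕ Fin n) ℝ V := Module.Basis.mk hb.indep hspan
    have hbc : ⇑b = Sum.elim e f := Module.Basis.coe_mk _ _
    haveI : FiniteDimensional ℝ (V [⋀^Fin (m + 2)]→ₗ[ℝ] ℝ) := findim_alt _
    set Lmap : (V [⋀^Fin m]→ₗ[ℝ] ℝ) →ₗ[ℝ] (V [⋀^Fin (m + 2)]→ₗ[ℝ] ℝ) :=
      (castHom hcast).comp (wedgeHom Ω m) with hLdef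
    set W := LinearMap.range Lmap with hWdef
    have hadj : ∀ (η : V [⋀^Fin m]→ₗ[ℝ] ℝ) (ω' : V [⋀^Fin (m + 2)]→ₗ[ℝ] ℝ),
        (pairB (⇑b) (m + 2) (Lmap η) ω' = 0 ↔ pairB (⇑b) m η (lower e f ω') = 0) := by
      intro η ω'
      have h := adj_key hb b hbc η ω'
      have hL2 : pairB (⇑b) (m + 2) (castForm (by omega) (wedge Ω η)) ω' =
          pairB (⇑b) (m + 2) (Lmap η) ω' := rfl
      rw [hL2] at h
      have hc1 : ((2 * Nat.factorial m : ℕ) : ℝ) ≠ 0 := by positivity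
      have hc2 : ((Nat.factorial (2 + m) * 2 : ℕ) : ℝ) ≠ 0 := by positivity
      constructor
      · intro h0
        rw [h0, mul_zero] at h
        exact ((mul_eq_zero.mp h.symm).resolve_left hc2)
      · intro h0
        rw [h0, mul_zero] at h
        exact ((mul_eq_zero.mp h).resolve_left hc1)
    have horth : (pairB (⇑b) (m + 2)).orthogonal W = LinearMap.ker (lowerHom e f (m + 2)) := by
      ext ω'
      rw [LinearMap.BilinForm.mem_orthogonal_iff, LinearMap.mem_ker]
      constructor
      · intro h
        have h2 : pairB (⇑b) m (lower e f ω') (lower e f ω') = 0 :=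
          (hadj _ ω').mp (h (Lmap (lower e f ω')) (LinearMap.mem_range_self _ _))
        exact pairB_eq_zero b h2
      · rintro h x ⟨η, rfl⟩
        show pairB (⇑b) (m + 2) (Lmap η) ω' = 0
        refine (hadj η ω').mpr ?_
        have hl : lower e f ω' = 0 := h
        rw [hl]
        exact map_zero _
    have hcompl : IsCompl W (LinearMap.ker (lowerHom e f (m + 2))) := by
      have hic := LinearMap.BilinForm.isCompl_orthogonal_of_restrict_nondegenerate
        (B := pairB (⇑b) (m + 2)) (pairB_isRefl _ _) (pairB_restrict_nondeg b (m + 2) W)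
      rwa [horth] at hic
    have hwo : ∀ η : V [⋀^Fin m]→ₗ[ℝ] ℝ, wedgeOmega Ω (m + 2) η = Lmap η := by
      intro η
      unfold wedgeOmega
      rw [dif_pos (by omega : 2 ≤ m + 2)]
      rfl
    obtain ⟨⟨w, ε⟩, hsum, huniq⟩ := Submodule.existsUnique_add_of_isCompl_prod hcompl ω
    obtain ⟨η₀, hη₀⟩ := w.2
    refine ⟨(↑ε, ↑w), ⟨?_, ⟨η₀, ?_⟩, ?_⟩, ?_⟩
    · show lower e f (↑ε : V [⋀^Fin (m + 2)]→ₗ[ℝ] ℝ) = 0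
      exact ε.2
    · show (↑w : V [⋀^Fin (m + 2)]→ₗ[ℝ] ℝ) = wedgeOmega Ω (m + 2) η₀
      rw [hwo, hη₀]
    · rw [← hsum]
      exact (add_comm _ _)
    · rintro ⟨q1, q2⟩ ⟨hq1, ⟨η', hq2⟩, hq3⟩
      dsimp only at hq1 hq2 hq3
      have hq2' : q2 ∈ W := ⟨η', by rw [hq2]; exact (hwo η').symm⟩
      have hq1' : q1 ∈ LinearMap.ker (lowerHom e f (m + 2)) := hq1
      have hu := huniq (⟨q2, hq2'⟩, ⟨q1, hq1'⟩)
        ((add_comm q2 q1).trans hq3.symm)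
      have e1 : q2 = ↑w := congrArg Subtype.val (congrArg Prod.fst hu)
      have e2 : q1 = ↑ε := congrArg Subtype.val (congrArg Prod.snd hu)
      rw [e1, e2]

end SymplSS
end

section
/- (Symplectic star operator.) Let (V, Ω) be a 2n-dimensional real symplectic vector space. For each 0 ≤ k ≤ 2n there exists a unique linear map * : Λ^k → Λ^{2n−k} such that for all alternating k-forms η and ω on V one has η ∧ (*ω) = (⊥^k(η ∧ ω)) · Ω^{∧n}, where ⊥^k(η ∧ ω) is the real number obtained by applying ⊥ k times to the 2k-form η ∧ ω. -/
open scoped TensorProduct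

namespace SymplSS

variable {V : Type*} [AddCommGroup V] [Module ℝ V]

section Aux
variable {N : ℕ}



/-- monomial alternating form -/
noncomputable def epsForm (b : Module.Basis (Fin N) ℝ V) {k : ℕ} (A : Finset (Fin N)) (hA : A.card = k) :
    V [⋀^Fin k]→ₗ[ℝ] ℝ :=
  Matrix.detRowAlternating.compLinearMap (LinearMap.pi fun i => b.coord (A.orderIsoOfFin hA i))

theorem epsForm_apply_basis (b : Module.Basis (Fin N) ℝ V) {k : ℕ} (A : Finset (Fin N))
    (hA : A.card = k) (j : Fin k → Fin N) :
    epsForm b A hA (fun p => b (j p)) =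
      Matrix.det (Matrix.of fun p i => if (A.orderIsoOfFin hA i : Fin N) = j p then (1:ℝ) else 0) := by
  rw [epsForm, AlternatingMap.compLinearMap_apply]
  congr 1
  ext p i
  simp [Module.Basis.coord_apply, Module.Basis.repr_self, Finsupp.single_apply, Matrix.of_apply, eq_comm]

theorem epsForm_self (b : Module.Basis (Fin N) ℝ V) {k : ℕ} (A : Finset (Fin N)) (hA : A.card = k) :
    epsForm b A hA (fun p => b (A.orderIsoOfFin hA p)) = 1 := by
  rw [epsForm_apply_basis]
  have : (Matrix.of fun p i => if ((A.orderIsoOfFin hA i : Fin N)) = (A.orderIsoOfFin hA p : Fin N)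
      then (1:ℝ) else 0) = (1 : Matrix (Fin k) (Fin k) ℝ) := by
    ext p i
    simp only [Matrix.of_apply, Matrix.one_apply]
    by_cases h : p = i
    · simp [h]
    · rw [if_neg, if_neg h]
      intro hc
      exact h (((A.orderIsoOfFin hA).injective (Subtype.ext hc)).symm)
  rw [this, Matrix.det_one]

theorem epsForm_eq_zero_of_not_covers (b : Module.Basis (Fin N) ℝ V) {k : ℕ} (A : Finset (Fin N))
    (hA : A.card = k) (j : Fin k → Fin N) (a : Fin N) (ha : a ∈ A) (haj : ∀ p, j p ≠ a) :
    epsForm b A hA (fun p => b (j p)) = 0 := by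
  rw [epsForm_apply_basis]
  obtain ⟨i, hi⟩ : ∃ i : Fin k, (A.orderIsoOfFin hA i : Fin N) = a :=
    ⟨(A.orderIsoOfFin hA).symm ⟨a, ha⟩, by simp⟩
  apply Matrix.det_eq_zero_of_column_eq_zero i
  intro p
  simp only [Matrix.of_apply, hi]
  rw [if_neg]
  exact fun hc => haj p hc.symm

theorem epsForm_ne (b : Module.Basis (Fin N) ℝ V) {k : ℕ} (A B : Finset (Fin N)) (hA : A.card = k)
    (hB : B.card = k) (hne : A ≠ B) :
    epsForm b A hA (fun p => b (B.orderIsoOfFin hB p)) = 0 := by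
  obtain ⟨a, haA, haB⟩ : ∃ a, a ∈ A ∧ a ∉ B := by
    by_contra h
    push_neg at h
    exact hne (Finset.eq_of_subset_of_card_le h (by omega))
  exact epsForm_eq_zero_of_not_covers b A hA _ a haA fun p hc =>
    haB (hc ▸ (B.orderIsoOfFin hB p).2)

theorem exists_perm_factor {k : ℕ} {j : Fin k → Fin N} (hj : Function.Injective j) :
    ∃ (A : Finset (Fin N)) (hA : A.card = k) (π : Equiv.Perm (Fin k)),
      ∀ p, j p = A.orderIsoOfFin hA (π p) := by
  classical
  set A : Finset (Fin N) := Finset.image j Finset.univ with hAdef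
  have hA : A.card = k := by
    rw [hAdef, Finset.card_image_of_injective _ hj, Finset.card_univ, Fintype.card_fin]
  have hmem : ∀ p, j p ∈ A := fun p => Finset.mem_image_of_mem j (Finset.mem_univ p)
  set t : Fin k → Fin k := fun p => (A.orderIsoOfFin hA).symm ⟨j p, hmem p⟩ with ht
  have htinj : Function.Injective t := fun p q hpq => by
    have h2 : (⟨j p, hmem p⟩ : {x // x ∈ A}) = ⟨j q, hmem q⟩ :=
      (A.orderIsoOfFin hA).symm.injective hpq
    exact hj (Subtype.ext_iff.mp h2)
  refine ⟨A, hA, Equiv.ofBijective t (Finite.injective_iff_bijective.mp htinj), fun p => ?_⟩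
  show j p = ((A.orderIsoOfFin hA) (t p) : Fin N)
  rw [ht]
  simp

theorem altSum_apply {α : Type*} {k : ℕ} (s : Finset α) (f : α → (V [⋀^Fin k]→ₗ[ℝ] ℝ))
    (v : Fin k → V) : (∑ i ∈ s, f i) v = ∑ i ∈ s, f i v := by
  induction s using Finset.cons_induction with
  | empty => simp
  | cons a s ha ih => simp [Finset.sum_cons, AlternatingMap.add_apply, ih]

theorem alt_eq_zero_of_vanish (b : Module.Basis (Fin N) ℝ V) {k : ℕ} (θ : V [⋀^Fin k]→ₗ[ℝ] ℝ)
    (h : ∀ (A : Finset (Fin N)) (hA : A.card = k),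
      θ (fun p => b (A.orderIsoOfFin hA p)) = 0) : θ = 0 := by
  refine Module.Basis.ext_alternating b fun v hv => ?_
  obtain ⟨A, hA, π, hπ⟩ := exists_perm_factor hv
  have : (fun i => b (v i)) = (fun p => b ((A.orderIsoOfFin hA p : Fin N))) ∘ π := by
    funext i; simp [hπ i]
  rw [this, AlternatingMap.map_perm, h A hA, smul_zero, AlternatingMap.zero_apply]

theorem alt_expansion (b : Module.Basis (Fin N) ℝ V) {k : ℕ} (θ : V [⋀^Fin k]→ₗ[ℝ] ℝ) :
    θ = ∑ S : {A : Finset (Fin N) // A.card = k},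
      θ (fun p => b (S.1.orderIsoOfFin S.2 p)) • epsForm b S.1 S.2 := by
  rw [← sub_eq_zero]
  apply alt_eq_zero_of_vanish b
  intro B hB
  rw [AlternatingMap.sub_apply, altSum_apply]
  rw [Finset.sum_eq_single_of_mem (⟨B, hB⟩ : {A : Finset (Fin N) // A.card = k})
    (Finset.mem_univ _)]
  · rw [AlternatingMap.smul_apply, epsForm_self, smul_eq_mul, mul_one, sub_self]
  · intro S _ hS
    rw [AlternatingMap.smul_apply, epsForm_ne b S.1 B S.2 hB (fun hc => hS (Subtype.ext hc)),
      smul_zero]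

theorem eps_linearIndependent (b : Module.Basis (Fin N) ℝ V) (k : ℕ) :
    LinearIndependent ℝ fun S : {A : Finset (Fin N) // A.card = k} =>
      epsForm b S.1 S.2 := by
  rw [Fintype.linearIndependent_iff]
  intro g hg B
  have := congrArg (fun θ : V [⋀^Fin k]→ₗ[ℝ] ℝ =>
    θ (fun p => b (B.1.orderIsoOfFin B.2 p))) hg
  simp only [altSum_apply, AlternatingMap.smul_apply,
    AlternatingMap.zero_apply] at this
  rw [Finset.sum_eq_single_of_mem B (Finset.mem_univ _)] at this
  · rwa [epsForm_self, smul_eq_mul, mul_one] at this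
  · intro S _ hS
    rw [epsForm_ne b S.1 B.1 S.2 B.2 (fun hc => hS (Subtype.ext hc)), smul_zero]

noncomputable def epsBasis (b : Module.Basis (Fin N) ℝ V) (k : ℕ) :
    Module.Basis {A : Finset (Fin N) // A.card = k} ℝ (V [⋀^Fin k]→ₗ[ℝ] ℝ) :=
  Module.Basis.mk (eps_linearIndependent b k) (by
    intro θ _
    rw [alt_expansion b θ]
    exact Submodule.sum_mem _ fun S _ =>
      Submodule.smul_mem _ _ (Submodule.subset_span ⟨S, rfl⟩))

theorem finrank_alt (b : Module.Basis (Fin N) ℝ V) (k : ℕ) :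
    Module.finrank ℝ (V [⋀^Fin k]→ₗ[ℝ] ℝ) = N.choose k := by
  rw [Module.finrank_eq_card_basis (epsBasis b k), Fintype.card_finset_len, Fintype.card_fin]


open Equiv in
set_option synthInstance.maxHeartbeats 1000000 in
set_option maxHeartbeats 1000000 in
theorem wedge_eps_eval {V : Type*} [AddCommGroup V] [Module ℝ V] {N k l : ℕ}
    (b : Module.Basis (Fin N) ℝ V) (h' : k + l = N) (A : Finset (Fin N)) (hA : A.card = k)
    (B : Finset (Fin N)) (hBA : B = Aᶜ) (hAc : B.card = l) (θ : V [⋀^Fin l]→ₗ[ℝ] ℝ) :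
    ∃ ε : ℝ, (ε = 1 ∨ ε = -1) ∧
      castForm h' (wedge (epsForm b A hA) θ) ⇑b =
        ε * θ (fun p => b (B.orderIsoOfFin hAc p)) := by
  classical
  subst hBA
  set η := epsForm b A hA with hη
  set gE : Fin k ⊕ Fin l ≃ Fin N := finSumFinEquiv.trans (finCongr h') with hgE
  set v : Fin k ⊕ Fin l → V := fun x => b (gE x) with hv
  have hval : castForm h' (wedge η θ) ⇑b =
      (TensorProduct.lid ℝ ℝ) ((η.domCoprod θ) v) := rfl
  have hinj : Function.Injective (Sum.elim (fun i => (A.orderIsoOfFin hA i : Fin N))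
      (fun p => (Aᶜ.orderIsoOfFin hAc p : Fin N))) := by
    rintro (i | p) (i' | p') hx
    · simp only [Sum.elim_inl] at hx
      exact congrArg Sum.inl ((A.orderIsoOfFin hA).injective (Subtype.ext hx))
    · exfalso
      simp only [Sum.elim_inl, Sum.elim_inr] at hx
      have h1 := (A.orderIsoOfFin hA i).2
      have h2 := (Aᶜ.orderIsoOfFin hAc p').2
      rw [hx] at h1
      exact (Finset.mem_compl.mp h2) h1
    · exfalso
      simp only [Sum.elim_inl, Sum.elim_inr] at hx
      have h1 := (A.orderIsoOfFin hA i').2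
      have h2 := (Aᶜ.orderIsoOfFin hAc p).2
      rw [hx] at h2
      exact (Finset.mem_compl.mp h2) h1
    · simp only [Sum.elim_inr] at hx
      exact congrArg Sum.inr ((Aᶜ.orderIsoOfFin hAc).injective (Subtype.ext hx))
  have hbij : Function.Bijective (Sum.elim (fun i => (A.orderIsoOfFin hA i : Fin N))
      (fun p => (Aᶜ.orderIsoOfFin hAc p : Fin N))) := by
    rw [Fintype.bijective_iff_injective_and_card]
    exact ⟨hinj, by simp [h']⟩
  set u : Fin k ⊕ Fin l ≃ Fin N := Equiv.ofBijective _ hbij with hu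
  have hu_inl : ∀ i, u (Sum.inl i) = (A.orderIsoOfFin hA i : Fin N) := fun i => rfl
  have hu_inr : ∀ p, u (Sum.inr p) = (Aᶜ.orderIsoOfFin hAc p : Fin N) := fun p => rfl
  set σ₀ : Perm (Fin k ⊕ Fin l) := u.trans gE.symm with hσ₀
  have hgσ₀ : ∀ x, gE (σ₀ x) = u x := fun x => by simp [hσ₀]
  have hzero : ∀ σq : Perm.ModSumCongr (Fin k) (Fin l), σq ≠ Quotient.mk'' σ₀ →
      (TensorProduct.lid ℝ ℝ) ((AlternatingMap.domCoprod.summand η θ σq) v) = 0 := by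
    intro σq hσq
    refine Quotient.inductionOn' σq (fun σ hne => ?_) hσq
    rw [AlternatingMap.domCoprod.summand_mk'']
    simp only [MultilinearMap.smul_apply, MultilinearMap.domDomCongr_apply,
      MultilinearMap.domCoprod_apply, AlternatingMap.coe_multilinearMap]
    by_cases hcov : ∀ a ∈ A, ∃ i, gE (σ (Sum.inl i)) = a
    · exfalso
      have hjinj : Function.Injective (fun i => gE (σ (Sum.inl i))) :=
        fun i i' hii => Sum.inl_injective (σ.injective (gE.injective hii))
      have himg : Finset.image (fun i => gE (σ (Sum.inl i))) Finset.univ = A := by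
        refine (Finset.eq_of_subset_of_card_le (fun a ha => ?_) ?_).symm
        · obtain ⟨i, hi⟩ := hcov a ha
          exact Finset.mem_image.mpr ⟨i, Finset.mem_univ i, hi⟩
        · rw [Finset.card_image_of_injective _ hjinj, Finset.card_univ, Fintype.card_fin, hA]
      have hmem : ∀ i, gE (σ (Sum.inl i)) ∈ A := by
        intro i
        rw [← himg]
        exact Finset.mem_image_of_mem _ (Finset.mem_univ i)
      have hmaps : Set.MapsTo (σ₀⁻¹ * σ) (Set.range Sum.inl) (Set.range Sum.inl) := by
        rintro x ⟨i, rfl⟩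
        have hx : (σ₀⁻¹ * σ) (Sum.inl i) = u.symm (gE (σ (Sum.inl i))) := by
          simp [Perm.mul_apply, hσ₀, Equiv.Perm.inv_def, Equiv.symm_trans_apply]
        rw [hx]
        set a' := (A.orderIsoOfFin hA).symm ⟨gE (σ (Sum.inl i)), hmem i⟩ with ha'
        refine ⟨a', ?_⟩
        have : u (Sum.inl a') = gE (σ (Sum.inl i)) := by
          rw [hu_inl, ha']
          simp
        rw [← this, Equiv.symm_apply_apply]
      have hrange := Perm.mem_sumCongrHom_range_of_perm_mapsTo_inl hmaps
      apply hne
      apply Quotient.sound'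
      rw [QuotientGroup.leftRel_apply]
      have := Subgroup.inv_mem _ hrange
      rwa [mul_inv_rev, inv_inv] at this
    · push_neg at hcov
      obtain ⟨a, ha, hai⟩ := hcov
      have hz : η (fun i => v (σ (Sum.inl i))) = 0 :=
        epsForm_eq_zero_of_not_covers b A hA _ a ha hai
      rw [hz, TensorProduct.zero_tmul, smul_zero, map_zero]
  have hsum : castForm h' (wedge η θ) ⇑b =
      (TensorProduct.lid ℝ ℝ) ((AlternatingMap.domCoprod.summand η θ (Quotient.mk'' σ₀)) v) := by
    rw [hval, AlternatingMap.domCoprod_apply, MultilinearMap.sum_apply, map_sum]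
    exact Finset.sum_eq_single_of_mem _ (Finset.mem_univ _) (fun σq _ h => hzero σq h)
  rw [hsum, AlternatingMap.domCoprod.summand_mk'']
  simp only [MultilinearMap.smul_apply, MultilinearMap.domDomCongr_apply,
    MultilinearMap.domCoprod_apply, AlternatingMap.coe_multilinearMap]
  have hl : (fun i => v (σ₀ (Sum.inl i))) = fun i => b ((A.orderIsoOfFin hA i : Fin N)) := by
    funext i; rw [hv]; simp only []; rw [hgσ₀, hu_inl]
  have hr : (fun p => v (σ₀ (Sum.inr p))) = fun p => b ((Aᶜ.orderIsoOfFin hAc p : Fin N)) := by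
    funext p; rw [hv]; simp only []; rw [hgσ₀, hu_inr]
  rcases Int.units_eq_one_or (Perm.sign σ₀) with hs | hs <;>
    rw [hs] <;>
    [refine ⟨1, Or.inl rfl, ?_⟩; refine ⟨-1, Or.inr rfl, ?_⟩] <;>
    simp only [one_smul, Units.neg_smul, map_neg, neg_mul, neg_inj] <;>
    · rw [hl, hr, hη, epsForm_self]
      simp

section Lin
variable {V : Type*} [AddCommGroup V] [Module ℝ V]

theorem wedge_add_left {k l : ℕ} (η η' : V [⋀^Fin k]→ₗ[ℝ] ℝ) (θ : V [⋀^Fin l]→ₗ[ℝ] ℝ) :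
    wedge (η + η') θ = wedge η θ + wedge η' θ := by
  simp only [wedge, ← AlternatingMap.domCoprod'_apply, TensorProduct.add_tmul, map_add,
    LinearMap.compAlternatingMap_add, AlternatingMap.domDomCongr_add]

theorem wedge_smul_left {k l : ℕ} (c : ℝ) (η : V [⋀^Fin k]→ₗ[ℝ] ℝ) (θ : V [⋀^Fin l]→ₗ[ℝ] ℝ) :
    wedge (c • η) θ = c • wedge η θ := by
  simp only [wedge, ← AlternatingMap.domCoprod'_apply, ← TensorProduct.smul_tmul', map_smul,
    LinearMap.compAlternatingMap_smul, AlternatingMap.domDomCongr_smul]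

theorem wedge_add_right {k l : ℕ} (η : V [⋀^Fin k]→ₗ[ℝ] ℝ) (θ θ' : V [⋀^Fin l]→ₗ[ℝ] ℝ) :
    wedge η (θ + θ') = wedge η θ + wedge η θ' := by
  simp only [wedge, ← AlternatingMap.domCoprod'_apply, TensorProduct.tmul_add, map_add,
    LinearMap.compAlternatingMap_add, AlternatingMap.domDomCongr_add]

theorem wedge_smul_right {k l : ℕ} (c : ℝ) (η : V [⋀^Fin k]→ₗ[ℝ] ℝ) (θ : V [⋀^Fin l]→ₗ[ℝ] ℝ) :
    wedge η (c • θ) = c • wedge η θ := by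
  simp only [wedge, ← AlternatingMap.domCoprod'_apply, TensorProduct.tmul_smul, map_smul,
    LinearMap.compAlternatingMap_smul, AlternatingMap.domDomCongr_smul]

theorem castForm_add {a b : ℕ} (h : a = b) (ω ω' : V [⋀^Fin a]→ₗ[ℝ] ℝ) :
    castForm h (ω + ω') = castForm h ω + castForm h ω' :=
  AlternatingMap.domDomCongr_add _ _ _

theorem castForm_smul {a b : ℕ} (h : a = b) (c : ℝ) (ω : V [⋀^Fin a]→ₗ[ℝ] ℝ) :
    castForm h (c • ω) = c • castForm h ω :=
  AlternatingMap.domDomCongr_smul _ _ _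

theorem lower_add {n : ℕ} (e f : Fin n → V) {k : ℕ} (ω ω' : V [⋀^Fin k]→ₗ[ℝ] ℝ) :
    lower e f (ω + ω') = lower e f ω + lower e f ω' :=
  (lowerHom e f k).map_add ω ω'

theorem lower_smul {n : ℕ} (e f : Fin n → V) {k : ℕ} (c : ℝ) (ω : V [⋀^Fin k]→ₗ[ℝ] ℝ) :
    lower e f (c • ω) = c • lower e f ω :=
  (lowerHom e f k).map_smul c ω

theorem lowerIter_add {n : ℕ} (e f : Fin n → V) (j : ℕ) :
    ∀ {k : ℕ} (ω ω' : V [⋀^Fin k]→ₗ[ℝ] ℝ),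
      lowerIter e f j (ω + ω') = lowerIter e f j ω + lowerIter e f j ω' := by
  induction j with
  | zero => intro k ω ω'; rfl
  | succ j ih =>
    intro k ω ω'
    show lower e f (lowerIter e f j (ω + ω')) = _
    rw [ih, lower_add]
    rfl

theorem lowerIter_smul {n : ℕ} (e f : Fin n → V) (j : ℕ) :
    ∀ {k : ℕ} (c : ℝ) (ω : V [⋀^Fin k]→ₗ[ℝ] ℝ),
      lowerIter e f j (c • ω) = c • lowerIter e f j ω := by
  induction j with
  | zero => intro k c ω; rfl
  | succ j ih =>
    intro k c ω
    show lower e f (lowerIter e f j (c • ω)) = _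
    rw [ih, lower_smul]
    rfl

end Lin

end Aux

set_option maxHeartbeats 4000000 in
set_option synthInstance.maxHeartbeats 400000 in
/-- symplectic star operator. For each `0 ≤ k ≤ 2n` there is a unique linear
map `⋆ : Λ^k → Λ^(2n - k)` such that `η ∧ ⋆ω = (⊥^k (η ∧ ω)) • Ω^{∧n}` for all `k`-forms
`η, ω`; here the `0`-form `⊥^k (η ∧ ω)` is identified with the real number obtained by
evaluating it on the empty family. -/
theorem symplectic_star_exists_unique
    {V : Type*} [AddCommGroup V] [Module ℝ V] [FiniteDimensional ℝ V] {n : ℕ}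
    (hdim : Module.finrank ℝ V = 2 * n)
    (Ω : V [⋀^Fin 2]→ₗ[ℝ] ℝ) (hΩ : Nondeg Ω)
    {e f : Fin n → V} (hb : IsSymplecticBasis Ω e f)
    (k : ℕ) (hk : k ≤ 2 * n) :
    ∃! star : (V [⋀^Fin k]→ₗ[ℝ] ℝ) →ₗ[ℝ] (V [⋀^Fin (2 * n - k)]→ₗ[ℝ] ℝ),
      ∀ η ω : V [⋀^Fin k]→ₗ[ℝ] ℝ,
        castForm (by omega : k + (2 * n - k) = 2 * n) (wedge η (star ω)) =
          (castForm (by omega : k + k - 2 * k = 0) (lowerIter e f k (wedge η ω)) ![]) •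
            omegaPow Ω n := by
  classical
  have h' : k + (2 * n - k) = 2 * n := by omega
  have h0 : k + k - 2 * k = 0 := by omega
  set b : Module.Basis (Fin (2 * n)) ℝ V :=
    (Module.Basis.mk hb.indep hb.span.ge).reindex (finSumFinEquiv.trans (finCongr (by omega))) with hbdef
  haveI : Module.Finite ℝ (V [⋀^Fin k]→ₗ[ℝ] ℝ) := Module.Finite.of_basis (epsBasis b k)
  haveI : Module.Finite ℝ (V [⋀^Fin (2 * n - k)]→ₗ[ℝ] ℝ) :=
    Module.Finite.of_basis (epsBasis b (2 * n - k))
  have topext : ∀ F G : V [⋀^Fin (2 * n)]→ₗ[ℝ] ℝ, F ⇑b = G ⇑b → F = G := by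
    intro F G h
    rw [F.eq_smul_basis_det b, G.eq_smul_basis_det b, h]
  -- the wedge-evaluation map into the dual
  set W : (V [⋀^Fin (2 * n - k)]→ₗ[ℝ] ℝ) →ₗ[ℝ] Module.Dual ℝ (V [⋀^Fin k]→ₗ[ℝ] ℝ) :=
    { toFun := fun θ =>
        { toFun := fun η => castForm h' (wedge η θ) ⇑b
          map_add' := fun η η' => by
            beta_reduce
            rw [wedge_add_left, castForm_add, AlternatingMap.add_apply]
          map_smul' := fun c η => by
            show castForm h' (wedge (c • η) θ) ⇑b = _
            rw [wedge_smul_left, castForm_smul, AlternatingMap.smul_apply]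
            rfl }
      map_add' := fun θ θ' => LinearMap.ext fun η => by
        simp only [LinearMap.coe_mk, AddHom.coe_mk, LinearMap.add_apply]
        rw [wedge_add_right, castForm_add, AlternatingMap.add_apply]
      map_smul' := fun c θ => LinearMap.ext fun η => by
        simp only [LinearMap.coe_mk, AddHom.coe_mk, LinearMap.smul_apply, RingHom.id_apply]
        rw [wedge_smul_right, castForm_smul, AlternatingMap.smul_apply] } with hWdef
  have Winj : Function.Injective W := by
    rw [← LinearMap.ker_eq_bot]
    rw [Submodule.eq_bot_iff]
    intro θ hθ
    rw [LinearMap.mem_ker] at hθ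
    apply alt_eq_zero_of_vanish b
    intro S hS
    have hA : Sᶜ.card = k := by
      rw [Finset.card_compl, hS, Fintype.card_fin]
      omega
    obtain ⟨ε, hε, heq⟩ := wedge_eps_eval b h' Sᶜ hA S (compl_compl S).symm hS θ
    have hz : W θ (epsForm b Sᶜ hA) = 0 := by rw [hθ]; rfl
    have : ε * θ (fun p => b (S.orderIsoOfFin hS p)) = 0 := by
      rw [← heq]
      exact hz
    rcases hε with hε | hε <;> rw [hε] at this <;> simpa using this
  have hfr : Module.finrank ℝ (V [⋀^Fin (2 * n - k)]→ₗ[ℝ] ℝ) =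
      Module.finrank ℝ (Module.Dual ℝ (V [⋀^Fin k]→ₗ[ℝ] ℝ)) := by
    rw [Subspace.dual_finrank_eq, finrank_alt b, finrank_alt b, Nat.choose_symm hk]
  set equivW := LinearMap.linearEquivOfInjective W Winj hfr with hequivW
  -- the bilinear-form side of the equation, as a map into the dual
  set G : (V [⋀^Fin k]→ₗ[ℝ] ℝ) →ₗ[ℝ] Module.Dual ℝ (V [⋀^Fin k]→ₗ[ℝ] ℝ) :=
    { toFun := fun ω =>
        { toFun := fun η =>
            (castForm h0 (lowerIter e f k (wedge η ω))) ![] * (omegaPow Ω n ⇑b)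
          map_add' := fun η η' => by
            beta_reduce
            rw [wedge_add_left, lowerIter_add, castForm_add, AlternatingMap.add_apply, add_mul]
          map_smul' := fun c η => by
            show (castForm h0 (lowerIter e f k (wedge (c • η) ω))) ![] * (omegaPow Ω n ⇑b) = _
            rw [wedge_smul_left, lowerIter_smul, castForm_smul, AlternatingMap.smul_apply]
            simp [mul_assoc] }
      map_add' := fun ω ω' => LinearMap.ext fun η => by
        simp only [LinearMap.coe_mk, AddHom.coe_mk, LinearMap.add_apply]
        rw [wedge_add_right, lowerIter_add, castForm_add, AlternatingMap.add_apply, add_mul]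
      map_smul' := fun c ω => LinearMap.ext fun η => by
        simp only [LinearMap.coe_mk, AddHom.coe_mk, LinearMap.smul_apply, RingHom.id_apply]
        rw [wedge_smul_right, lowerIter_smul, castForm_smul, AlternatingMap.smul_apply]
        simp [mul_assoc] } with hGdef
  set star : (V [⋀^Fin k]→ₗ[ℝ] ℝ) →ₗ[ℝ] (V [⋀^Fin (2 * n - k)]→ₗ[ℝ] ℝ) :=
    (equivW.symm : Module.Dual ℝ (V [⋀^Fin k]→ₗ[ℝ] ℝ) →ₗ[ℝ] _) ∘ₗ G with hstar
  have hWstar : ∀ ω, W (star ω) = G ω := by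
    intro ω
    have h1 : star ω = equivW.symm (G ω) := rfl
    have h2 : ∀ x, W x = equivW x := fun x =>
      (LinearMap.linearEquivOfInjective_apply Winj hfr x).symm
    rw [h1, h2, LinearEquiv.apply_symm_apply]
  refine ⟨star, fun η ω => ?_, fun star' hstar' => ?_⟩
  · apply topext
    have hL : castForm (by omega : k + (2 * n - k) = 2 * n) (wedge η (star ω)) ⇑b =
        W (star ω) η := rfl
    rw [hL, hWstar]
    rw [AlternatingMap.smul_apply]
    show _ = (castForm _ (lowerIter e f k (wedge η ω))) ![] • (omegaPow Ω n ⇑b)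
    rw [smul_eq_mul]
    rfl
  · apply LinearMap.ext
    intro ω
    apply Winj
    rw [hWstar]
    apply LinearMap.ext
    intro η
    have h1 : W (star' ω) η = castForm (by omega : k + (2 * n - k) = 2 * n)
        (wedge η (star' ω)) ⇑b := rfl
    rw [h1, hstar' η ω, AlternatingMap.smul_apply]
    show _ • (omegaPow Ω n ⇑b) = _
    rw [smul_eq_mul]
    rfl

end SymplSS
end
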